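/- Every stable fixed point r of the replicator dynamics is Nash stable: r is a symmetric Nash equilibrium of (A,A) and yᵀAy ≤ 0 for every y supported in the support of r with Σ_i y_i = 0. -/
import Mathlib


open Matrix

private lemma expand_quad {n : ℕ} (A : Matrix (Fin n) (Fin n) ℝ) (r y : Fin n → ℝ) (t : ℝ) :
    (r + t • y) ⬝ᵥ A.mulVec (r + t • y)
      = r ⬝ᵥ A.mulVec r + t * (r ⬝ᵥ A.mulVec y) + t * (y ⬝ᵥ A.mulVec r)
        + t ^ 2 * (y ⬝ᵥ A.mulVec y) := by
  simp [Matrix.mulVec_add, Matrix.mulVec_smul, dotProduct_add, add_dotProduct,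
    smul_dotProduct, dotProduct_smul, smul_eq_mul]
  ring

private lemma symm_swap {n : ℕ} (A : Matrix (Fin n) (Fin n) ℝ) (hA : A.IsSymm)
    (r y : Fin n → ℝ) : r ⬝ᵥ A.mulVec y = y ⬝ᵥ A.mulVec r := by
  rw [Matrix.dotProduct_mulVec, ← Matrix.mulVec_transpose, hA.eq, dotProduct_comm]

private lemma small_coeff (a b δ : ℝ) (hδ : 0 < δ)
    (h2 : ∀ t, 0 < t → t ≤ δ → a * t + b * t ^ 2 ≤ 0) : a ≤ 0 := by
  by_contra hc
  push_neg at hc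
  set t := min δ (a / (|b| + 1)) with ht
  have htpos : 0 < t := lt_min hδ (div_pos hc (by positivity))
  have h3 := h2 t htpos (min_le_left _ _)
  have htle : t ≤ a / (|b| + 1) := min_le_right _ _
  have hb : b * t ≥ -|b| * t := by nlinarith [abs_nonneg b, neg_abs_le b]
  have : |b| * t ≤ |b| * (a / (|b| + 1)) := mul_le_mul_of_nonneg_left htle (abs_nonneg b)
  have h4 : |b| * (a / (|b| + 1)) < a := by
    rw [mul_div_assoc', div_lt_iff₀ (by positivity)]
    nlinarith [abs_nonneg b]
  nlinarith

/-- every stable fixed point `r` of the replicator dynamics (equivalently,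
by Lyubich's characterization, a local maximum of `π(x) = xᵀAx` on the simplex which is a
fixed point) is Nash stable: it is a symmetric Nash equilibrium of `(A,A)` and
`yᵀAy ≤ 0` for every `y` supported on the support of `r` with `Σ_i y_i = 0`. -/
theorem stable_fixed_point_is_nashStable {n : ℕ} (A : Matrix (Fin n) (Fin n) ℝ)
    (hA : A.IsSymm) (hApos : ∀ i j, 0 < A i j)
    (r : Fin n → ℝ) (hr : r ∈ stdSimplex ℝ (Fin n))
    (hfix : ∀ i, 0 < r i → A.mulVec r i = r ⬝ᵥ A.mulVec r)
    (hstable : IsLocalMaxOn (fun x : Fin n → ℝ => x ⬝ᵥ A.mulVec x)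
      (stdSimplex ℝ (Fin n)) r) :
    (∀ i, 0 < r i → ∀ j, A.mulVec r j ≤ A.mulVec r i) ∧
    (∀ y : Fin n → ℝ, (∑ i, y i) = 0 → (∀ i, r i = 0 → y i = 0) →
      y ⬝ᵥ A.mulVec y ≤ 0) := by
  obtain ⟨ε, hε, hball⟩ :
      ∃ ε > 0, ∀ x ∈ Metric.ball r ε ∩ stdSimplex ℝ (Fin n),
        x ⬝ᵥ A.mulVec x ≤ r ⬝ᵥ A.mulVec r := by
    obtain ⟨ε, hε, h⟩ := Metric.mem_nhdsWithin_iff.mp hstable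
    exact ⟨ε, hε, fun x hx => h hx⟩
  -- key estimate along rays r + t • y
  have key : ∀ y : Fin n → ℝ,
      (∃ δ : ℝ, 0 < δ ∧ ∀ t : ℝ, 0 < t → t ≤ δ → r + t • y ∈ stdSimplex ℝ (Fin n)) →
      ∃ δ : ℝ, 0 < δ ∧ ∀ t : ℝ, 0 < t → t ≤ δ →
        (2 * (y ⬝ᵥ A.mulVec r)) * t + (y ⬝ᵥ A.mulVec y) * t ^ 2 ≤ 0 := by
    intro y ⟨δ₀, hδ₀, hmem⟩
    refine ⟨min δ₀ (ε / (2 * (‖y‖ + 1))), lt_min hδ₀ (by positivity), fun t ht htδ => ?_⟩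
    have ht1 : t ≤ δ₀ := le_trans htδ (min_le_left _ _)
    have ht2 : t ≤ ε / (2 * (‖y‖ + 1)) := le_trans htδ (min_le_right _ _)
    have hmem' := hmem t ht ht1
    have hdist : dist (r + t • y) r < ε := by
      rw [dist_eq_norm, add_sub_cancel_left, norm_smul, Real.norm_eq_abs,
        abs_of_pos ht]
      have hy : (0:ℝ) ≤ ‖y‖ := norm_nonneg y
      calc t * ‖y‖ ≤ (ε / (2 * (‖y‖ + 1))) * ‖y‖ := mul_le_mul_of_nonneg_right ht2 hy
        _ < ε := by
          rw [div_mul_eq_mul_div, div_lt_iff₀ (by positivity)]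
          nlinarith
    have := hball (r + t • y) ⟨Metric.mem_ball.mpr hdist, hmem'⟩
    rw [expand_quad, symm_swap A hA r y] at this
    nlinarith [this]
  -- the payoff of every pure strategy is at most the average payoff
  have hub : ∀ j, A.mulVec r j ≤ r ⬝ᵥ A.mulVec r := by
    intro j
    set y : Fin n → ℝ := Pi.single j 1 - r with hy
    have hmem : ∃ δ : ℝ, 0 < δ ∧ ∀ t : ℝ, 0 < t → t ≤ δ → r + t • y ∈ stdSimplex ℝ (Fin n) := by
      refine ⟨1, one_pos, fun t ht ht1 => ?_⟩
      have heq : r + t • y = (1 - t) • r + t • (Pi.single j 1 : Fin n → ℝ) := by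
        funext i
        simp [hy, Pi.smul_apply, Pi.sub_apply, smul_eq_mul]
        ring
      rw [heq]
      exact (convex_stdSimplex ℝ (Fin n)) hr (single_mem_stdSimplex ℝ j)
        (by linarith) ht.le (by ring)
    obtain ⟨δ, hδ, hkey⟩ := key y hmem
    have hyAr : y ⬝ᵥ A.mulVec r = A.mulVec r j - r ⬝ᵥ A.mulVec r := by
      simp [hy, sub_dotProduct, Pi.single_apply, dotProduct, sub_mul, ite_mul,
        Finset.sum_ite_eq']
    have : 2 * (y ⬝ᵥ A.mulVec r) ≤ 0 :=
      small_coeff _ (y ⬝ᵥ A.mulVec y) δ hδ (fun t ht htδ => hkey t ht htδ)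
    rw [hyAr] at this
    linarith
  constructor
  · intro i hi j
    rw [hfix i hi]
    exact hub j
  · intro y hsum hsupp
    rcases Nat.eq_zero_or_pos n with hn | hn
    · subst hn
      exact absurd hr.2 (by simp)
    haveI : Nonempty (Fin n) := ⟨⟨0, hn⟩⟩
    have hyAr : y ⬝ᵥ A.mulVec r = 0 := by
      have hterm : ∀ i, y i * A.mulVec r i = y i * (r ⬝ᵥ A.mulVec r) := by
        intro i
        rcases eq_or_lt_of_le (hr.1 i) with h | h
        · rw [hsupp i h.symm]; ring
        · rw [hfix i h]
      calc y ⬝ᵥ A.mulVec r = ∑ i, y i * A.mulVec r i := rfl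
        _ = ∑ i, y i * (r ⬝ᵥ A.mulVec r) := Finset.sum_congr rfl (fun i _ => hterm i)
        _ = (∑ i, y i) * (r ⬝ᵥ A.mulVec r) := by rw [Finset.sum_mul]
        _ = 0 := by rw [hsum, zero_mul]
    -- membership of r + t • y for small t
    set M : ℝ := 1 + ∑ i, |y i| with hM
    have hMpos : 0 < M := by positivity
    have hyM : ∀ i, |y i| ≤ M := by
      intro i
      have : |y i| ≤ ∑ i, |y i| :=
        Finset.single_le_sum (fun i _ => abs_nonneg (y i)) (Finset.mem_univ i)
      linarith
    set m : ℝ := Finset.univ.inf' Finset.univ_nonempty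
      (fun i => if y i = 0 then 1 else r i) with hm
    have hmpos : 0 < m := by
      rw [hm, Finset.lt_inf'_iff]
      intro i _
      by_cases hyi : y i = 0
      · simp [hyi]
      · simp only [hyi, if_false]
        rcases eq_or_lt_of_le (hr.1 i) with h | h
        · exact absurd (hsupp i h.symm) hyi
        · exact h
    have hmr : ∀ i, y i ≠ 0 → m ≤ r i := by
      intro i hyi
      have h := Finset.inf'_le (fun i => if y i = 0 then 1 else r i) (Finset.mem_univ i)
      rw [if_neg hyi] at h
      exact h
    have hmem : ∃ δ : ℝ, 0 < δ ∧ ∀ t : ℝ, 0 < t → t ≤ δ → r + t • y ∈ stdSimplex ℝ (Fin n) := by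
      refine ⟨m / M, by positivity, fun t ht htδ => ?_⟩
      constructor
      · intro i
        by_cases hyi : y i = 0
        · simp [hyi, hr.1 i]
        · have h1 : m ≤ r i := hmr i hyi
          have h2 : |y i| ≤ M := hyM i
          have h3 : t * |y i| ≤ (m / M) * M := by
            have : t * |y i| ≤ (m / M) * |y i| :=
              mul_le_mul_of_nonneg_right htδ (abs_nonneg _)
            have : (m / M) * |y i| ≤ (m / M) * M :=
              mul_le_mul_of_nonneg_left h2 (by positivity)
            linarith [mul_le_mul_of_nonneg_right htδ (abs_nonneg (y i))]
          rw [div_mul_cancel₀ _ hMpos.ne'] at h3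
          have h4 : -(t * y i) ≤ t * |y i| := by
            rw [← mul_neg_one]
            calc t * y i * (-1) = t * (-(y i)) := by ring
              _ ≤ t * |y i| := mul_le_mul_of_nonneg_left (neg_le_abs _) ht.le
          simp only [Pi.add_apply, Pi.smul_apply, smul_eq_mul]
          linarith
      · have h5 : ∑ i, (r i + t * y i) = 1 := by
          rw [Finset.sum_add_distrib, hr.2, ← Finset.mul_sum, hsum]; ring
        simpa using h5
    obtain ⟨δ, hδ, hkey⟩ := key y hmem
    have := hkey δ hδ le_rfl
    rw [hyAr] at this
    by_contra hq
    push_neg at hq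
    nlinarith [mul_pos hq (mul_pos hδ hδ)]
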